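/- arXiv:2207.04522 — 2 statements merged into one kernel-verified Lean document; each statement's English description precedes it below -/
import Mathlib

section
/- Let W be a balanced tetrahedral erasure channel with H(W) ≥ 2/3. Then H(W^p) ≥ 11/27; in particular H(W^p) ≥ 1/3, so the entropy of the parallel child cannot jump below 1/3 when the parent's entropy exceeds 2/3. -/
noncomputable section

/-- A quintuple of reals representing a candidate tetrahedral erasure channel
`W = (p, q, r, s, t)`. -/
structure TECQuint where
  p : ℝ
  q : ℝ
  r : ℝ
  s : ℝ
  t : ℝ

namespace TECQuint

/-- `W` is a tetrahedral erasure channel: all five entries are nonnegative and sum to 1. -/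
def IsTEC (W : TECQuint) : Prop :=
  0 ≤ W.p ∧ 0 ≤ W.q ∧ 0 ≤ W.r ∧ 0 ≤ W.s ∧ 0 ≤ W.t ∧
    W.p + W.q + W.r + W.s + W.t = 1

/-- `W` is balanced: `q = r = s`. -/
def Balanced (W : TECQuint) : Prop := W.q = W.r ∧ W.r = W.s

/-- The serial child `W^s`. -/
def ser (W : TECQuint) : TECQuint where
  p := W.p ^ 2
  q := W.p * W.s + W.s * W.q + W.q * W.p
  r := W.p * W.q + W.q * W.r + W.r * W.p
  s := W.p * W.r + W.r * W.s + W.s * W.p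
  t := 1 - (W.p ^ 2 + (W.p * W.s + W.s * W.q + W.q * W.p)
      + (W.p * W.q + W.q * W.r + W.r * W.p)
      + (W.p * W.r + W.r * W.s + W.s * W.p))

/-- The parallel child `W^p`. -/
def par (W : TECQuint) : TECQuint where
  p := 1 - ((W.t * W.s + W.s * W.q + W.q * W.t)
      + (W.t * W.q + W.q * W.r + W.r * W.t)
      + (W.t * W.r + W.r * W.s + W.s * W.t) + W.t ^ 2)
  q := W.t * W.s + W.s * W.q + W.q * W.t
  r := W.t * W.q + W.q * W.r + W.r * W.t
  s := W.t * W.r + W.r * W.s + W.s * W.t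
  t := W.t ^ 2

/-- The moment of inertia `A(W) = (q−r)² + (r−s)² + (s−q)²`. -/
def inertia (W : TECQuint) : ℝ :=
  (W.q - W.r) ^ 2 + (W.r - W.s) ^ 2 + (W.s - W.q) ^ 2

/-- The (conditional) entropy `H(W) = (q+r+s)/2 + t`. -/
def entropy (W : TECQuint) : ℝ := (W.q + W.r + W.s) / 2 + W.t

/-- The edge mass `E(W) = q + r + s`. -/
def edgeMass (W : TECQuint) : ℝ := W.q + W.r + W.s

/-- The Quetelet index `Q(W) = E(W) / (H(W)(1−H(W)))`. -/
def quetelet (W : TECQuint) : ℝ :=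
  edgeMass W / (entropy W * (1 - entropy W))

/-- One step of the channel process: `true` picks the serial child, `false` the parallel child. -/
def child (W : TECQuint) (b : Bool) : TECQuint := if b then ser W else par W

/-- The descendant `W^c` of `W` along the string `c ∈ {s,p}^n`. -/
def descend : TECQuint → {n : ℕ} → (Fin n → Bool) → TECQuint
  | W, 0, _ => W
  | W, _ + 1, c => descend (child W (c 0)) (fun i => c i.succ)

end TECQuint

open TECQuint

theorem parallel_entropy_no_jump (W : TECQuint) (hW : W.IsTEC) (hbal : W.Balanced)
    (hH : 2 / 3 ≤ entropy W) :
    11 / 27 ≤ entropy (par W) ∧ 1 / 3 ≤ entropy (par W) := by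
  obtain ⟨hp, hq, hr, hs, ht, hsum⟩ := hW
  obtain ⟨hqr, hrs⟩ := hbal
  have hr' : W.r = W.q := hqr.symm
  have hs' : W.s = W.q := (hqr.trans hrs).symm
  simp only [entropy, par, hr', hs'] at *
  have key : 11 / 27 ≤ (W.t * W.q + W.q * W.q + W.q * W.t +
      (W.t * W.q + W.q * W.q + W.q * W.t) +
      (W.t * W.q + W.q * W.q + W.q * W.t)) / 2 + W.t ^ 2 := by
    nlinarith [sq_nonneg (W.q + 2*W.t - 2/3), sq_nonneg (3*W.q + W.t - 1), mul_nonneg hq ht, mul_nonneg hp hq, mul_nonneg hp ht]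
  exact ⟨key, le_trans (by norm_num) key⟩
end
end

section
/- For every tetrahedral erasure channel W, both children W^s and W^p are again tetrahedral erasure channels (all five entries are nonnegative and sum to 1); moreover, if W is balanced then both W^s and W^p are balanced. -/
noncomputable section

open TECQuint

theorem children_are_TECs (W : TECQuint) (hW : W.IsTEC) :
    IsTEC (ser W) ∧ IsTEC (par W) ∧
      (W.Balanced → Balanced (ser W) ∧ Balanced (par W)) := by
  obtain ⟨hp, hq, hr, hs, ht, hsum⟩ := hW
  simp only [IsTEC, ser, par, TECQuint.Balanced]
  refine ⟨⟨by positivity, by positivity, by positivity, by positivity, ?_, by ring⟩,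
    ⟨?_, by positivity, by positivity, by positivity, by positivity, by ring⟩, ?_⟩
  · nlinarith [mul_nonneg hq ht, mul_nonneg hr ht, mul_nonneg hs ht,
      mul_nonneg hp ht, mul_nonneg hq hr, mul_nonneg hr hs, mul_nonneg hs hq,
      sq_nonneg W.q, sq_nonneg W.r, sq_nonneg W.s, sq_nonneg W.t]
  · nlinarith [mul_nonneg hq hp, mul_nonneg hr hp, mul_nonneg hs hp,
      mul_nonneg hp ht, mul_nonneg hq hr, mul_nonneg hr hs, mul_nonneg hs hq,
      sq_nonneg W.q, sq_nonneg W.r, sq_nonneg W.s, sq_nonneg W.p]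
  · rintro ⟨h1, h2⟩
    rw [h1, h2]
    refine ⟨⟨by ring, by ring⟩, by ring, by ring⟩
end
end
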